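/- Let d, T be natural numbers with d ≥ 1, let λ > 0 and B ≥ 0 be reals, let x_0, …, x_{T−1} ∈ ℝ^d satisfy ‖x_t‖₂ ≤ B for all t < T, and let c_0, …, c_{T−1} ≥ 0 be reals. Define the matrices Σ_0 = λ·I and Σ_{t+1} = Σ_t + x_t x_tᵀ + c_t·I for t < T, and set w_t² = x_tᵀ Σ_t⁻¹ x_t. Then Σ_{t=0}^{T−1} min(w_t², 1) ≤ 2·d·log(1 + (T·B² + d·Σ_{t=0}^{T−1} c_t)/(d·λ)). -/

import Mathlib

open Matrix Finset

section Helpers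

variable {n : Type*} [Fintype n] [DecidableEq n]

lemma psd_vecMulVec (v : n → ℝ) : (vecMulVec v v).PosSemidef := by
  have h := Matrix.posSemidef_conjTranspose_mul_self (Matrix.replicateRow Unit v)
  rw [Matrix.conjTranspose_replicateRow] at h
  simpa [Matrix.vecMulVec_eq Unit, star_trivial] using h

lemma psd_smul_one {c : ℝ} (hc : 0 ≤ c) : (c • (1 : Matrix n n ℝ)).PosSemidef := by
  rw [Matrix.smul_one_eq_diagonal]
  exact Matrix.PosSemidef.diagonal fun _ => hc

lemma pd_smul_one {c : ℝ} (hc : 0 < c) : (c • (1 : Matrix n n ℝ)).PosDef := by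
  rw [Matrix.smul_one_eq_diagonal]
  exact Matrix.posDef_diagonal_iff.mpr fun _ => hc

lemma det_add_vecMulVec {A : Matrix n n ℝ} (hA : IsUnit A.det) (u : n → ℝ) :
    (A + vecMulVec u u).det = A.det * (1 + u ⬝ᵥ A⁻¹ *ᵥ u) := by
  rw [Matrix.vecMulVec_eq Unit, Matrix.det_add_replicateCol_mul_replicateRow hA]
  congr 1
  rw [Matrix.det_unique]
  simp [Matrix.mul_apply, Matrix.replicateRow_apply, Matrix.replicateCol_apply, dotProduct, Matrix.mulVec,
    Finset.mul_sum, Finset.sum_mul, mul_comm]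
  rw [Finset.sum_comm]
  exact Finset.sum_congr rfl fun i _ => Finset.sum_congr rfl fun j _ => by ring

lemma dot_nonneg {M : Matrix n n ℝ} (hM : M.PosSemidef) (v : n → ℝ) :
    0 ≤ v ⬝ᵥ M *ᵥ v := by
  simpa using hM.re_dotProduct_nonneg v

lemma trace_eq_sum_eigenvalues' {M : Matrix n n ℝ} (hM : M.IsHermitian) :
    M.trace = ∑ i, hM.eigenvalues i := by
  conv_lhs => rw [hM.spectral_theorem, Unitary.conjStarAlgAut_apply]
  rw [Matrix.trace_mul_comm, ← Matrix.mul_assoc,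
    (Matrix.mem_unitaryGroup_iff'.mp (hM.eigenvectorUnitary).2), one_mul]
  simp [Matrix.trace_diagonal]

lemma det_le_det_add_smul_one {M : Matrix n n ℝ} (hM : M.PosDef) {c : ℝ} (hc : 0 ≤ c) :
    M.det ≤ (M + c • 1).det := by
  have hH : M.IsHermitian := hM.isHermitian
  set U := (hH.eigenvectorUnitary : Matrix n n ℝ) with hUdef
  have hU1 : U * star U = 1 := Matrix.mem_unitaryGroup_iff.mp (hH.eigenvectorUnitary).2
  have key : M + c • 1 = U * Matrix.diagonal (fun i => hH.eigenvalues i + c) * star U := by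
    have : Matrix.diagonal (fun i => hH.eigenvalues i + c)
        = Matrix.diagonal (RCLike.ofReal ∘ hH.eigenvalues) + c • 1 := by
      rw [Matrix.smul_one_eq_diagonal, ← Matrix.diagonal_add]
      rfl
    rw [this, Matrix.mul_add, Matrix.add_mul]
    conv_lhs => rw [hH.spectral_theorem, Unitary.conjStarAlgAut_apply]
    congr 1
    rw [Matrix.mul_smul, Matrix.smul_mul, Matrix.mul_one, hU1]
  have hdetU : U.det * (star U).det = 1 := by
    rw [← Matrix.det_mul, hU1, Matrix.det_one]
  rw [key, Matrix.det_mul, Matrix.det_mul, hH.det_eq_prod_eigenvalues]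
  have h2 : U.det * (Matrix.diagonal fun i => hH.eigenvalues i + c).det * (star U).det
      = (Matrix.diagonal fun i => hH.eigenvalues i + c).det := by
    linear_combination (Matrix.diagonal fun i => hH.eigenvalues i + c).det * hdetU
  rw [h2, Matrix.det_diagonal]
  simp only [RCLike.ofReal_real_eq_id, id]
  exact Finset.prod_le_prod (fun i _ => (hM.eigenvalues_pos i).le) (fun i _ => by linarith)

lemma min_le_two_log {u : ℝ} (hu : 0 ≤ u) : min u 1 ≤ 2 * Real.log (1 + u) := by
  have h1 : (0:ℝ) < 1 + u := by linarith
  have h2 : 1 - (1 + u)⁻¹ ≤ Real.log (1 + u) := Real.one_sub_inv_le_log_of_pos h1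
  have h3 : 1 - (1 + u)⁻¹ = u / (1 + u) := by field_simp; ring
  have key : min u 1 ≤ 2 * (u / (1 + u)) := by
    rw [mul_div_assoc', le_div_iff₀ h1]
    rcases le_total u 1 with h | h
    · rw [min_eq_left h]; nlinarith
    · rw [min_eq_right h]; nlinarith
  linarith

lemma log_det_le {d : ℕ} (hd : 1 ≤ d) {M : Matrix (Fin d) (Fin d) ℝ} (hM : M.PosDef) :
    Real.log M.det ≤ d * Real.log (M.trace / d) := by
  have hH : M.IsHermitian := hM.isHermitian
  have hpos : ∀ i, 0 < hH.eigenvalues i := hM.eigenvalues_pos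
  have hd0 : (0:ℝ) < d := by exact_mod_cast hd
  have hdet : M.det = ∏ i, hH.eigenvalues i := by
    rw [hH.det_eq_prod_eigenvalues]; simp [RCLike.ofReal_real_eq_id]
  have htr : M.trace = ∑ i, hH.eigenvalues i := trace_eq_sum_eigenvalues' hH
  have jensen := (strictConcaveOn_log_Ioi.concaveOn).le_map_sum
    (t := Finset.univ) (w := fun _ : Fin d => (d:ℝ)⁻¹) (p := fun i => hH.eigenvalues i)
    (fun _ _ => by positivity)
    (by simp [Finset.card_univ]; field_simp)
    (fun i _ => hpos i)
  simp only [smul_eq_mul] at jensen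
  rw [hdet, Real.log_prod (fun i _ => (hpos i).ne')]
  have h1 : ∑ i, Real.log (hH.eigenvalues i)
      = d * ∑ i : Fin d, (d:ℝ)⁻¹ * Real.log (hH.eigenvalues i) := by
    rw [← Finset.mul_sum, ← mul_assoc, mul_inv_cancel₀ hd0.ne', one_mul]
  rw [h1]
  have h2 : M.trace / d = ∑ i : Fin d, (d:ℝ)⁻¹ * hH.eigenvalues i := by
    rw [htr, ← Finset.mul_sum]; ring
  rw [h2]
  exact mul_le_mul_of_nonneg_left jensen hd0.le

lemma trace_pos' {d : ℕ} (hd : 1 ≤ d) {M : Matrix (Fin d) (Fin d) ℝ} (hM : M.PosDef) :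
    0 < M.trace := by
  rw [trace_eq_sum_eigenvalues' hM.isHermitian]
  have : Nonempty (Fin d) := ⟨⟨0, hd⟩⟩
  exact Finset.sum_pos (fun i _ => hM.eigenvalues_pos i) Finset.univ_nonempty

end Helpers

theorem elliptical_potential_bound
    (d T : ℕ) (hd : 1 ≤ d) (lam B : ℝ) (hlam : 0 < lam) (hB : 0 ≤ B)
    (x : ℕ → Fin d → ℝ) (hx : ∀ t < T, Real.sqrt (∑ i, x t i ^ 2) ≤ B)
    (c : ℕ → ℝ) (hc : ∀ t < T, 0 ≤ c t)
    (S : ℕ → Matrix (Fin d) (Fin d) ℝ)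
    (hS0 : S 0 = lam • (1 : Matrix (Fin d) (Fin d) ℝ))
    (hSs : ∀ t < T, S (t + 1) =
      S t + vecMulVec (x t) (x t) + c t • (1 : Matrix (Fin d) (Fin d) ℝ)) :
    ∑ t ∈ Finset.range T, min (x t ⬝ᵥ (S t)⁻¹ *ᵥ x t) 1 ≤
      2 * d *
        Real.log (1 + ((T : ℝ) * B ^ 2 + d * ∑ t ∈ Finset.range T, c t) / (d * lam)) := by
  have hd0 : (0:ℝ) < d := by exact_mod_cast hd
  set w : ℕ → ℝ := fun t => x t ⬝ᵥ (S t)⁻¹ *ᵥ x t with hw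
  -- positive definiteness
  have hPD : ∀ t, t ≤ T → (S t).PosDef := by
    intro t
    induction t with
    | zero => intro _; rw [hS0]; exact pd_smul_one hlam
    | succ n ih =>
      intro h
      have hnT : n < T := Nat.lt_of_succ_le h
      rw [hSs n hnT]
      exact ((ih hnT.le).add_posSemidef (psd_vecMulVec _)).add_posSemidef
        (psd_smul_one (hc n hnT))
  -- nonnegativity of widths
  have hw0 : ∀ t, t < T → 0 ≤ w t := fun t ht =>
    dot_nonneg ((hPD t ht.le).inv).posSemidef _
  -- determinant step
  have hdet_step : ∀ t, t < T → (S t).det * (1 + w t) ≤ (S (t + 1)).det := by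
    intro t ht
    have hPDt := hPD t ht.le
    have hUnit : IsUnit (S t).det := isUnit_iff_ne_zero.mpr hPDt.det_pos.ne'
    have h1 : (S t + vecMulVec (x t) (x t)).PosDef :=
      hPDt.add_posSemidef (psd_vecMulVec _)
    calc (S t).det * (1 + w t) = (S t + vecMulVec (x t) (x t)).det :=
          (det_add_vecMulVec hUnit (x t)).symm
      _ ≤ (S t + vecMulVec (x t) (x t) + c t • 1).det :=
          det_le_det_add_smul_one h1 (hc t ht)
      _ = (S (t + 1)).det := by rw [hSs t ht]
  -- product bound on determinant
  have hprod : ∀ n, n ≤ T →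
      lam ^ d * ∏ t ∈ Finset.range n, (1 + w t) ≤ (S n).det := by
    intro n
    induction n with
    | zero =>
      intro _
      rw [hS0, Matrix.det_smul, Matrix.det_one]
      simp [Fintype.card_fin]
    | succ n ih =>
      intro h
      have hnT : n < T := Nat.lt_of_succ_le h
      rw [Finset.prod_range_succ, ← mul_assoc]
      calc lam ^ d * (∏ t ∈ Finset.range n, (1 + w t)) * (1 + w n)
          ≤ (S n).det * (1 + w n) :=
            mul_le_mul_of_nonneg_right (ih hnT.le) (by linarith [hw0 n hnT])
        _ ≤ (S (n + 1)).det := hdet_step n hnT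
  -- trace bound
  have htrace : ∀ n, n ≤ T →
      (S n).trace ≤ d * lam + n * B ^ 2 + d * ∑ t ∈ Finset.range n, c t := by
    intro n
    induction n with
    | zero =>
      intro _
      rw [hS0, Matrix.trace_smul, Matrix.trace_one]
      simp [Fintype.card_fin, mul_comm]
    | succ n ih =>
      intro h
      have hnT : n < T := Nat.lt_of_succ_le h
      have hxn : ∑ i, x n i ^ 2 ≤ B ^ 2 := by
        have h1 : (0:ℝ) ≤ ∑ i, x n i ^ 2 := Finset.sum_nonneg fun i _ => sq_nonneg _
        calc ∑ i, x n i ^ 2 = Real.sqrt (∑ i, x n i ^ 2) ^ 2 := (Real.sq_sqrt h1).symm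
          _ ≤ B ^ 2 := pow_le_pow_left₀ (Real.sqrt_nonneg _) (hx n hnT) 2
      have htr1 : (vecMulVec (x n) (x n)).trace = ∑ i, x n i ^ 2 := by
        simp [Matrix.trace, Matrix.diag, Matrix.vecMulVec_apply, sq]
      rw [hSs n hnT, Matrix.trace_add, Matrix.trace_add, htr1, Matrix.trace_smul,
        Matrix.trace_one, Finset.sum_range_succ]
      have := ih hnT.le
      simp only [smul_eq_mul, Fintype.card_fin, Nat.cast_succ]
      nlinarith [hc n hnT]
  -- assemble
  have hA0 : (0:ℝ) ≤ (T:ℝ) * B ^ 2 + d * ∑ t ∈ Finset.range T, c t := by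
    have : (0:ℝ) ≤ ∑ t ∈ Finset.range T, c t :=
      Finset.sum_nonneg fun t ht => hc t (Finset.mem_range.mp ht)
    positivity
  set A0 : ℝ := (T:ℝ) * B ^ 2 + d * ∑ t ∈ Finset.range T, c t with hA0def
  set R : ℝ := 1 + A0 / (d * lam) with hRdef
  have hR1 : (1:ℝ) ≤ R := by
    have h := div_nonneg hA0 (show (0:ℝ) ≤ (d:ℝ) * lam by positivity)
    rw [hRdef]
    linarith
  have hRpos : (0:ℝ) < R := by linarith
  have hfacpos : ∀ t ∈ Finset.range T, (0:ℝ) < 1 + w t := fun t ht => by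
    linarith [hw0 t (Finset.mem_range.mp ht)]
  have hPpos : (0:ℝ) < ∏ t ∈ Finset.range T, (1 + w t) := Finset.prod_pos hfacpos
  have hPDT := hPD T le_rfl
  -- log chain
  have hlog1 : ∑ t ∈ Finset.range T, Real.log (1 + w t)
      ≤ Real.log (S T).det - d * Real.log lam := by
    have hle := hprod T le_rfl
    have hlhs : (0:ℝ) < lam ^ d * ∏ t ∈ Finset.range T, (1 + w t) := by positivity
    have := (Real.log_le_log_iff hlhs hPDT.det_pos).mpr hle
    rw [Real.log_mul (by positivity) hPpos.ne', Real.log_pow,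
      Real.log_prod (fun t ht => (hfacpos t ht).ne')] at this
    linarith
  have hlog2 : Real.log (S T).det ≤ d * Real.log lam + d * Real.log R := by
    have h1 : Real.log (S T).det ≤ d * Real.log ((S T).trace / d) := log_det_le hd hPDT
    have h2 : (S T).trace / d ≤ lam * R := by
      rw [div_le_iff₀ hd0]
      have : d * (lam * R) = d * lam + A0 := by
        rw [hRdef]; field_simp
      calc (S T).trace ≤ d * lam + T * B ^ 2 + d * ∑ t ∈ Finset.range T, c t :=
            htrace T le_rfl
        _ = d * lam + A0 := by rw [hA0def]; ring
        _ = lam * R * d := by rw [← this]; ring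
    have h3 : Real.log ((S T).trace / d) ≤ Real.log (lam * R) :=
      (Real.log_le_log_iff (div_pos (trace_pos' hd hPDT) hd0) (by positivity)).mpr h2
    have h4 : Real.log (lam * R) = Real.log lam + Real.log R :=
      Real.log_mul hlam.ne' hRpos.ne'
    calc Real.log (S T).det ≤ d * Real.log ((S T).trace / d) := h1
      _ ≤ d * Real.log (lam * R) := mul_le_mul_of_nonneg_left h3 hd0.le
      _ = d * Real.log lam + d * Real.log R := by rw [h4]; ring
  calc ∑ t ∈ Finset.range T, min (w t) 1
      ≤ ∑ t ∈ Finset.range T, 2 * Real.log (1 + w t) :=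
        Finset.sum_le_sum fun t ht => min_le_two_log (hw0 t (Finset.mem_range.mp ht))
    _ = 2 * ∑ t ∈ Finset.range T, Real.log (1 + w t) := by rw [Finset.mul_sum]
    _ ≤ 2 * (Real.log (S T).det - d * Real.log lam) := by linarith
    _ ≤ 2 * (d * Real.log R) := by linarith
    _ = 2 * d * Real.log R := by ring
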